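/- Let C ⊆ ℝ be a Borel set that is linearly independent over ℚ (i.e., linearly independent as a subset of ℝ viewed as a ℚ-vector space). Then the additive subgroup of (ℝ, +) generated by C is a Borel subset of ℝ. -/

import Mathlib

open MeasureTheory Set

/-- The "sorted tuples with entries in `C`" set. -/
private def tupSet (C : Set ℝ) (n : ℕ) : Set (Fin n → ℝ) :=
  {x | StrictMono x ∧ ∀ i, x i ∈ C}

private lemma measurableSet_tupSet (C : Set ℝ) (hC : MeasurableSet C) (n : ℕ) :
    MeasurableSet (tupSet C n) := by
  have h1 : MeasurableSet {x : Fin n → ℝ | StrictMono x} := by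
    have : {x : Fin n → ℝ | StrictMono x}
        = ⋂ (i : Fin n) (j : Fin n) (_ : i < j), {x : Fin n → ℝ | x i < x j} := by
      ext x
      simp only [Set.mem_iInter, Set.mem_setOf_eq]
      exact ⟨fun h i j hij => h hij, fun h a b hab => h a b hab⟩
    rw [this]
    refine MeasurableSet.iInter fun i => MeasurableSet.iInter fun j =>
      MeasurableSet.iInter fun _ => ?_
    exact measurableSet_lt (measurable_pi_apply i) (measurable_pi_apply j)
  have h2 : MeasurableSet {x : Fin n → ℝ | ∀ i, x i ∈ C} := by
    have : {x : Fin n → ℝ | ∀ i, x i ∈ C} = ⋂ i, (fun x : Fin n → ℝ => x i) ⁻¹' C := by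
      ext x; simp [Set.mem_iInter]
    rw [this]
    exact MeasurableSet.iInter fun i => (measurable_pi_apply i) hC
  exact h1.inter h2

/-- Injectivity of the coefficient sum map on sorted tuples, from linear independence. -/
private lemma injOn_sum (C : Set ℝ)
    (hind : LinearIndependent ℚ ((↑) : C → ℝ)) (n : ℕ) (k : Fin n → ℤ)
    (hk : ∀ i, k i ≠ 0) :
    Set.InjOn (fun x : Fin n → ℝ => ∑ i, (k i : ℝ) * x i) (tupSet C n) := by
  rintro x ⟨hxm, hxC⟩ y ⟨hym, hyC⟩ hxy
  set l : ℝ →₀ ℚ :=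
    (∑ i, Finsupp.single (x i) (k i : ℚ)) - ∑ i, Finsupp.single (y i) (k i : ℚ) with hl
  have hsupp : (l.support : Set ℝ) ⊆ C := by
    intro a ha
    have h1 := Finsupp.support_sub (f := ∑ i, Finsupp.single (x i) (k i : ℚ))
      (g := ∑ i, Finsupp.single (y i) (k i : ℚ))
    have h2 := Finsupp.support_finset_sum
      (s := Finset.univ) (f := fun i => Finsupp.single (x i) (k i : ℚ))
    have h3 := Finsupp.support_finset_sum
      (s := Finset.univ) (f := fun i => Finsupp.single (y i) (k i : ℚ))
    have ha' : a ∈ (∑ i, Finsupp.single (x i) (k i : ℚ)).support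
        ∪ (∑ i, Finsupp.single (y i) (k i : ℚ)).support := h1 ha
    rcases Finset.mem_union.1 ha' with h | h
    · obtain ⟨i, _, hi⟩ := Finset.mem_biUnion.1 (h2 h)
      have := Finsupp.support_single_subset hi
      rw [Finset.mem_singleton] at this
      exact this ▸ hxC i
    · obtain ⟨i, _, hi⟩ := Finset.mem_biUnion.1 (h3 h)
      have := Finsupp.support_single_subset hi
      rw [Finset.mem_singleton] at this
      exact this ▸ hyC i
  have htot : Finsupp.linearCombination ℚ (id : ℝ → ℝ) l = 0 := by
    rw [hl, map_sub, map_sum, map_sum]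
    simp only [Finsupp.linearCombination_single, id_eq]
    have hz : ∀ z : Fin n → ℝ, ∑ i, ((k i : ℚ) • z i) = ∑ i, (k i : ℝ) * z i := by
      intro z
      refine Finset.sum_congr rfl fun i _ => ?_
      rw [Rat.smul_def]; norm_num
    rw [hz x, hz y]
    exact sub_eq_zero.2 hxy
  have hl0 : l = 0 := by
    refine (linearIndepOn_iff (v := id)).1 hind l ?_ htot
    rwa [Finsupp.mem_supported]
  have key : ∀ a : ℝ,
      (∑ i, (if x i = a then (k i : ℚ) else 0)) = ∑ i, (if y i = a then (k i : ℚ) else 0) := by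
    intro a
    have := congrArg (fun f : ℝ →₀ ℚ => f a) hl0
    simp only [hl, Finsupp.coe_sub, Pi.sub_apply, Finsupp.coe_zero, Pi.zero_apply,
      Finsupp.finset_sum_apply, Finsupp.single_apply] at this
    linarith [this]
  have hrange : Set.range x = Set.range y := by
    have dir : ∀ (u v : Fin n → ℝ), StrictMono u → StrictMono v →
        (∀ a, (∑ i, (if u i = a then (k i : ℚ) else 0))
          = ∑ i, (if v i = a then (k i : ℚ) else 0)) →
        Set.range u ⊆ Set.range v := by
      intro u v hu _ h a ⟨i, hi⟩
      by_contra hmem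
      have hz : ∀ j, (if v j = a then (k j : ℚ) else 0) = 0 := by
        intro j
        have : v j ≠ a := fun hj => hmem ⟨j, hj⟩
        simp [this]
      have hsum0 : (∑ j, (if v j = a then (k j : ℚ) else 0)) = 0 := by
        simp only [hz, Finset.sum_const_zero]
      have hsumu : (∑ j, (if u j = a then (k j : ℚ) else 0)) = (k i : ℚ) := by
        rw [Finset.sum_eq_single_of_mem i (Finset.mem_univ i)]
        · simp [hi]
        · intro j _ hji
          have : u j ≠ a := by
            intro hj
            exact hji (hu.injective (by rw [hi, hj]))
          simp [this]
      have := h a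
      rw [hsumu, hsum0] at this
      exact hk i (by exact_mod_cast this)
    exact le_antisymm (dir x y hxm hym key) (dir y x hym hxm fun a => (key a).symm)
  haveI : WellFoundedLT (Fin n) := inferInstance
  exact (StrictMono.range_inj (f := x) (g := y) hxm hym).1 hrange

private lemma closure_eq_iUnion (C : Set ℝ) :
    ((AddSubgroup.closure C : AddSubgroup ℝ) : Set ℝ) =
      ⋃ (n : ℕ), ⋃ (k : {k : Fin n → ℤ // ∀ i, k i ≠ 0}),
        (fun x : Fin n → ℝ => ∑ i, (k.1 i : ℝ) * x i) '' tupSet C n := by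
  ext a
  constructor
  · intro ha
    have ha' : a ∈ Submodule.span ℤ C := by
      have h := Submodule.span_int_eq_addSubgroupClosure (M := ℝ) C
      rw [← h] at ha
      simpa using ha
    obtain ⟨c, hcsupp, hcsum⟩ := Submodule.mem_span_set.1 ha'
    refine Set.mem_iUnion.2 ⟨c.support.card, Set.mem_iUnion.2
      ⟨⟨fun i => c (c.support.orderEmbOfFin rfl i), fun i => ?_⟩,
        (fun i => (c.support.orderEmbOfFin rfl i : ℝ)),
        ⟨(c.support.orderEmbOfFin rfl).strictMono, fun i => ?_⟩, ?_⟩⟩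
    · exact Finsupp.mem_support_iff.1 (c.support.orderEmbOfFin_mem rfl i)
    · exact hcsupp (c.support.orderEmbOfFin_mem rfl i)
    · show ∑ i, (c (c.support.orderEmbOfFin rfl i) : ℝ) * c.support.orderEmbOfFin rfl i = a
      have : ∑ i, (c (c.support.orderEmbOfFin rfl i) : ℝ) * c.support.orderEmbOfFin rfl i
          = ∑ m ∈ c.support, (c m : ℝ) * m := by
        refine Finset.sum_bij (fun i _ => c.support.orderEmbOfFin rfl i)
          (fun i _ => c.support.orderEmbOfFin_mem rfl i)
          (fun i _ j _ hij => (c.support.orderEmbOfFin rfl).injective hij) ?_ (fun i _ => rfl)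
        intro m hm
        have hm' : m ∈ Set.range (c.support.orderEmbOfFin rfl) := by
          rw [Finset.range_orderEmbOfFin]
          exact hm
        obtain ⟨i, hi⟩ := hm'
        exact ⟨i, Finset.mem_univ i, hi⟩
      rw [this, ← hcsum, Finsupp.sum]
      exact Finset.sum_congr rfl fun m _ => (zsmul_eq_mul _ _).symm
  · intro ha
    obtain ⟨n, hn⟩ := Set.mem_iUnion.1 ha
    obtain ⟨k, hk⟩ := Set.mem_iUnion.1 hn
    obtain ⟨x, ⟨_, hxC⟩, hxa⟩ := hk
    rw [← hxa, SetLike.mem_coe]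
    refine sum_mem fun i _ => ?_
    have : (k.1 i : ℝ) * x i = k.1 i • x i := by rw [zsmul_eq_mul]
    rw [this]
    exact AddSubgroup.zsmul_mem _ (AddSubgroup.subset_closure (hxC i)) _

/-- The additive subgroup of `ℝ` generated by a Borel set that is linearly
independent over `ℚ` is Borel. -/
theorem measurableSet_addSubgroup_closure_of_linearIndependent
    (C : Set ℝ) (hC : MeasurableSet C)
    (hind : LinearIndependent ℚ ((↑) : C → ℝ)) :
    MeasurableSet ((AddSubgroup.closure C : AddSubgroup ℝ) : Set ℝ) := by
  rw [closure_eq_iUnion C]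
  refine MeasurableSet.iUnion fun n => MeasurableSet.iUnion fun k => ?_
  refine MeasurableSet.image_of_continuousOn_injOn (measurableSet_tupSet C hC n) ?_ ?_
  · exact (Continuous.continuousOn (by continuity))
  · exact injOn_sum C hind n k.1 k.2
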